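/- Assume A_1 is invertible and that L̃ has finite entries. Then: (1) for every n ≥ 1, the matrix L̃(n) (expected occupation at level 0 before hitting level n) is invertible; (2) the fundamental matrix G = ℙ(J_{τ^{1}}) is invertible; (3) for every n ≥ 1 the scale matrix W(n) = G^{−n} L̃(n) is invertible. -/

import Mathlib

/- Framework: a discrete-time, discrete-space upward skip-free Markov additive chain (MAC)
on ℤ × {1,…,N}, with one-step transition matrices `A m` (for a level increment of `m`), is
encoded combinatorially: the law of the chain started at a state `s` is determined by the
weights of its finite trajectories, so every probability/expectation appearing in the paper
can be written as a (countable) sum of trajectory weights. -/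

attribute [local instance] Classical.propDecidable

noncomputable section

namespace MACPaper

/-- state space: level × phase -/
abbrev S (N : ℕ) := ℤ × Fin N

variable {N : ℕ}

/-- one-step transition weight -/
def step (A : ℤ → Matrix (Fin N) (Fin N) ℝ) (s t : S N) : ℝ :=
  A (t.1 - s.1) s.2 t.2

/-- probability weight of a finite trajectory, given by the list of successive states after `s` -/
def wt (A : ℤ → Matrix (Fin N) (Fin N) ℝ) : S N → List (S N) → ℝ
  | _, [] => 1
  | s, t :: r => step A s t * wt A t r

/-- the trajectory (as a function of time) determined by start `s` and subsequent states `l` -/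
def pos (s : S N) (l : List (S N)) : ℕ → S N
  | 0 => s
  | n + 1 => l.getD n s

/-- expectation of a path functional over trajectories of length `n` started at `s` -/
def expec (A : ℤ → Matrix (Fin N) (Fin N) ℝ) (s : S N) (n : ℕ)
    (f : (ℕ → S N) → ℝ) : ℝ :=
  ∑' l : { l : List (S N) // l.length = n }, f (pos s l.1) * wt A s l.1

/-- probability of an event depending on the trajectory up to time `n` -/
def prob (A : ℤ → Matrix (Fin N) (Fin N) ℝ) (s : S N) (n : ℕ)
    (E : (ℕ → S N) → Prop) : ℝ :=
  expec A s n fun p => if E p then 1 else 0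

/-- F(z) = Σ_{m=-1}^{∞} z^m A_{-m}   (entrywise) -/
def Fmat (A : ℤ → Matrix (Fin N) (Fin N) ℝ) (z : ℝ) : Matrix (Fin N) (Fin N) ℝ :=
  Matrix.of fun i j => ∑' m : ℤ, z ^ m * A (-m) i j

/-- P = Σ_m A_m  (entrywise) -/
def Pmat (A : ℤ → Matrix (Fin N) (Fin N) ℝ) : Matrix (Fin N) (Fin N) ℝ :=
  Matrix.of fun i j => ∑' m : ℤ, A m i j

/-- `τ^{x} = n`: the chain first hits level `x` at time `n` -/
def hitsAt (x : ℤ) (n : ℕ) (p : ℕ → S N) : Prop :=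
  (p n).1 = x ∧ ∀ k < n, (p k).1 ≠ x

/-- matrix 𝔼(v^{τ^{x}}; τ^{x} < ∞, J_{τ^{x}}), chain started at (0,·) -/
def hitMat (A : ℤ → Matrix (Fin N) (Fin N) ℝ) (v : ℝ) (x : ℤ) :
    Matrix (Fin N) (Fin N) ℝ :=
  Matrix.of fun i j =>
    ∑' n : ℕ, v ^ n * prob A ((0 : ℤ), i) n fun p => hitsAt x n p ∧ (p n).2 = j

/-- v-discounted occupation mass matrix at level `x` (infinite horizon), chain started at (0,·) -/
def occMat (A : ℤ → Matrix (Fin N) (Fin N) ℝ) (v : ℝ) (x : ℤ) :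
    Matrix (Fin N) (Fin N) ℝ :=
  Matrix.of fun i j =>
    ∑' k : ℕ, v ^ k * prob A ((0 : ℤ), i) k fun p => p k = (x, j)

/-- v-discounted occupation mass at level 0 up to the first hitting time of level `n` -/
def occUpToMat (A : ℤ → Matrix (Fin N) (Fin N) ℝ) (v : ℝ) (n : ℤ) :
    Matrix (Fin N) (Fin N) ℝ :=
  Matrix.of fun i j =>
    ∑' k : ℕ, v ^ k * prob A ((0 : ℤ), i) k fun p =>
      p k = ((0 : ℤ), j) ∧ ∀ m < k, (p m).1 ≠ n

/-- the fundamental matrix G = ℙ(J_{τ^{1}}) -/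
def Gmat (A : ℤ → Matrix (Fin N) (Fin N) ℝ) : Matrix (Fin N) (Fin N) ℝ :=
  hitMat A 1 1

/-- L̃ : occupation mass matrix at level 0, infinite horizon -/
def Ltilde (A : ℤ → Matrix (Fin N) (Fin N) ℝ) : Matrix (Fin N) (Fin N) ℝ :=
  occMat A 1 0

/-- the first scale matrix W(n) = (G^{-n} - ℙ(J_{τ^{-n}})) L̃ -/
def Wmat (A : ℤ → Matrix (Fin N) (Fin N) ℝ) (n : ℕ) : Matrix (Fin N) (Fin N) ℝ :=
  ((Gmat A)⁻¹ ^ n - hitMat A 1 (-(n : ℤ))) * Ltilde A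

/-- v-discounted first scale matrix W_v(n) = (G_v^{-n} - 𝔼(v^{τ^{-n}}; J_{τ^{-n}})) L̃_v -/
def WmatV (A : ℤ → Matrix (Fin N) (Fin N) ℝ) (v : ℝ) (n : ℕ) :
    Matrix (Fin N) (Fin N) ℝ :=
  ((hitMat A v 1)⁻¹ ^ n - hitMat A v (-(n : ℤ))) * occMat A v 0

/-- the second scale matrix Z(z,n) = z^{-n}[I + Σ_{k=0}^{n} z^k W(k) (I - F(z))] -/
def Zmat (A : ℤ → Matrix (Fin N) (Fin N) ℝ) (z : ℝ) (n : ℕ) :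
    Matrix (Fin N) (Fin N) ℝ :=
  z⁻¹ ^ n • (1 + (∑ k ∈ Finset.range (n + 1), z ^ k • Wmat A k) * (1 - Fmat A z))

/-- matrix 𝔼(v^{τ_a^+}; τ_a^+ < τ_{-b}^-, J_{τ_a^+}) (upward exit from the strip [-b,a]) -/
def upExitMat (A : ℤ → Matrix (Fin N) (Fin N) ℝ) (v : ℝ) (a b : ℤ) :
    Matrix (Fin N) (Fin N) ℝ :=
  Matrix.of fun i j =>
    ∑' n : ℕ, v ^ n * prob A ((0 : ℤ), i) n fun p =>
      a ≤ (p n).1 ∧ (∀ k < n, -b < (p k).1 ∧ (p k).1 < a) ∧ (p n).2 = j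

/-- matrix 𝔼(z^{-X_{τ_{-b}^-}}; τ_{-b}^- < τ_a^+, J_{τ_{-b}^-}) (downward exit from [-b,a]) -/
def downExitMat (A : ℤ → Matrix (Fin N) (Fin N) ℝ) (z : ℝ) (a b : ℤ) :
    Matrix (Fin N) (Fin N) ℝ :=
  Matrix.of fun i j =>
    ∑' n : ℕ, expec A ((0 : ℤ), i) n fun p =>
      if (p n).1 ≤ -b ∧ (∀ k < n, -b < (p k).1 ∧ (p k).1 < a) ∧ (p n).2 = j
      then z ^ (-(p n).1) else 0

/-- matrix 𝔼(z^{-X_{τ_{-b}^-}}; τ_{-b}^- < ∞, J_{τ_{-b}^-}) (one-sided downward exit) -/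
def oneDownMat (A : ℤ → Matrix (Fin N) (Fin N) ℝ) (z : ℝ) (b : ℤ) :
    Matrix (Fin N) (Fin N) ℝ :=
  Matrix.of fun i j =>
    ∑' n : ℕ, expec A ((0 : ℤ), i) n fun p =>
      if (p n).1 ≤ -b ∧ (∀ k < n, -b < (p k).1) ∧ (p n).2 = j
      then z ^ (-(p n).1) else 0

/-- two-sided Skorokhod reflection of the level path `X` in [-d,0], started at `x`:
the regulated process H -/
def reflH (d : ℕ) (x : ℤ) (X : ℕ → ℤ) : ℕ → ℤ
  | 0 => x
  | n + 1 =>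
      reflH d x X n + (X (n + 1) - X n)
        - max (reflH d x X n + (X (n + 1) - X n)) 0
        + max (-(d : ℤ) - (reflH d x X n + (X (n + 1) - X n))) 0

/-- upper regulator R^+ of the two-sided reflection in [-d,0] -/
def reflRp (d : ℕ) (x : ℤ) (X : ℕ → ℤ) : ℕ → ℤ
  | 0 => 0
  | n + 1 => reflRp d x X n + max (reflH d x X n + (X (n + 1) - X n)) 0

/-- lower regulator R^- of the two-sided reflection in [-d,0] -/
def reflRm (d : ℕ) (x : ℤ) (X : ℕ → ℤ) : ℕ → ℤ
  | 0 => 0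
  | n + 1 => reflRm d x X n + max (-(d : ℤ) - (reflH d x X n + (X (n + 1) - X n))) 0

/-- lower regulator of the one-sided reflection at -b : R^{-b}_n = -b - min(-b, min_{k≤n} X_k) -/
def lowReg (b : ℤ) (X : ℕ → ℤ) (n : ℕ) : ℤ :=
  -b - min (-b) ((Finset.range (n + 1)).inf' ⟨0, Finset.mem_range.mpr (Nat.succ_pos n)⟩ X)

abbrev Vec (N k : ℕ) := { l : List (S N) // l.length = k }
variable {A : ℤ → Matrix (Fin N) (Fin N) ℝ}
lemma wt_nil (s : S N) : wt A s [] = 1 := rfl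
lemma pos_nil (s : S N) : pos s ([] : List (S N)) = fun _ => s := by
  funext t; cases t <;> rfl
lemma wt_cons (s t : S N) (r : List (S N)) : wt A s (t :: r) = step A s t * wt A t r := rfl
lemma wt_nonneg (hA : ∀ m i j, 0 ≤ A m i j) (s : S N) (l : List (S N)) : 0 ≤ wt A s l := by
  induction l generalizing s with
  | nil => norm_num [wt_nil]
  | cons t r ih => exact mul_nonneg (hA _ _ _) (ih t)
lemma step_summable (hsum : ∀ i, Summable fun q : ℤ × Fin N => A q.1 i q.2) (s : S N) :
    Summable fun t : S N => step A s t :=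
  ((Equiv.prodCongr (Equiv.subRight s.1) (Equiv.refl (Fin N))).summable_iff
    (f := fun q : ℤ × Fin N => A q.1 s.2 q.2)).mpr (hsum s.2)
lemma tsum_step_le (hsub : ∀ i, ∑' q : ℤ × Fin N, A q.1 i q.2 ≤ 1) (s : S N) :
    ∑' t : S N, step A s t ≤ 1 := by
  have h : ∑' t : S N, step A s t = ∑' q : ℤ × Fin N, A q.1 s.2 q.2 :=
    Equiv.tsum_eq (Equiv.prodCongr (Equiv.subRight s.1) (Equiv.refl (Fin N)))
      (fun q : ℤ × Fin N => A q.1 s.2 q.2)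
  rw [h]; exact hsub s.2
lemma step_le_one (hA : ∀ m i j, 0 ≤ A m i j)
    (hsum : ∀ i, Summable fun q : ℤ × Fin N => A q.1 i q.2)
    (hsub : ∀ i, ∑' q : ℤ × Fin N, A q.1 i q.2 ≤ 1) (s t : S N) : step A s t ≤ 1 :=
  le_trans (Summable.le_tsum (step_summable hsum s) t (fun _ _ => hA _ _ _)) (tsum_step_le hsub s)
lemma wt_le_one (hA : ∀ m i j, 0 ≤ A m i j)
    (hsum : ∀ i, Summable fun q : ℤ × Fin N => A q.1 i q.2)
    (hsub : ∀ i, ∑' q : ℤ × Fin N, A q.1 i q.2 ≤ 1) (s : S N) (l : List (S N)) :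
    wt A s l ≤ 1 := by
  induction l generalizing s with
  | nil => norm_num [wt_nil]
  | cons t r ih =>
    rw [wt_cons]
    exact mul_le_one₀ (step_le_one hA hsum hsub s t) (wt_nonneg hA t r) (ih t)
instance uniqueVec0 : Unique (Vec N 0) :=
  ⟨⟨⟨[], rfl⟩⟩, fun l => Subtype.ext (List.length_eq_zero_iff.mp l.2)⟩
def consEquiv (k : ℕ) : (S N × Vec N k) ≃ Vec N (k + 1) where
  toFun x := ⟨x.1 :: x.2.1, by simp [x.2.2]⟩
  invFun l :=
    match l with
    | ⟨[], h⟩ => absurd h (by simp)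
    | ⟨t :: r, h⟩ => (t, ⟨r, by simpa using h⟩)
  left_inv := fun ⟨t, r, hr⟩ => rfl
  right_inv := fun ⟨l, h⟩ => by
    cases l with
    | nil => simp at h
    | cons t r => rfl

-- ==== NEW in this chunk ====

lemma wt_sum_aux (hA : ∀ m i j, 0 ≤ A m i j)
    (hsum : ∀ i, Summable fun q : ℤ × Fin N => A q.1 i q.2)
    (hsub : ∀ i, ∑' q : ℤ × Fin N, A q.1 i q.2 ≤ 1) :
    ∀ (k : ℕ) (s : S N),
      Summable (fun l : Vec N k => wt A s l.1) ∧ (∑' l : Vec N k, wt A s l.1) ≤ 1 := by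
  intro k
  induction k with
  | zero =>
    intro s
    constructor
    · exact Summable.of_finite
    · rw [tsum_eq_single (default : Vec N 0) (fun b hb => absurd (Subsingleton.elim b default) hb)]
      exact le_of_eq (wt_nil s)
  | succ k ih =>
    intro s
    have hnn : ∀ x : S N × Vec N k, 0 ≤ step A s x.1 * wt A x.1 x.2.1 :=
      fun x => mul_nonneg (hA _ _ _) (wt_nonneg hA _ _)
    have hfib : ∀ t : S N, Summable (fun r : Vec N k => step A s t * wt A t r.1) :=
      fun t => (ih t).1.mul_left _
    have hrow : ∀ t : S N, (∑' r : Vec N k, step A s t * wt A t r.1) ≤ step A s t := by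
      intro t
      rw [tsum_mul_left]
      calc step A s t * ∑' r : Vec N k, wt A t r.1 ≤ step A s t * 1 :=
            mul_le_mul_of_nonneg_left (ih t).2 (hA _ _ _)
        _ = step A s t := mul_one _
    have hprod : Summable (fun x : S N × Vec N k => step A s x.1 * wt A x.1 x.2.1) := by
      refine (summable_prod_of_nonneg hnn).2 ⟨hfib, ?_⟩
      refine Summable.of_nonneg_of_le (fun t => tsum_nonneg fun r => hnn (t, r))
        hrow (step_summable hsum s)
    have hcomp : Summable (fun l : Vec N (k+1) => wt A s l.1) := by
      have := ((consEquiv k).summable_iff (f := fun l : Vec N (k+1) => wt A s l.1)).mp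
      exact this hprod
    refine ⟨hcomp, ?_⟩
    have he : ∑' l : Vec N (k+1), wt A s l.1
        = ∑' x : S N × Vec N k, step A s x.1 * wt A x.1 x.2.1 :=
      ((consEquiv k).tsum_eq (f := fun l : Vec N (k+1) => wt A s l.1)).symm
    rw [he, Summable.tsum_prod' hprod hfib]
    calc (∑' (t : S N) (r : Vec N k), step A s t * wt A t r.1)
        ≤ ∑' t : S N, step A s t :=
          Summable.tsum_le_tsum hrow
            (by
              refine Summable.of_nonneg_of_le (fun t => tsum_nonneg fun r => hnn (t, r))
                hrow (step_summable hsum s))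
            (step_summable hsum s)
      _ ≤ 1 := tsum_step_le hsub s

-- ==== chunk 3: prob basics and pos/list lemmas ====

lemma prob_def (s : S N) (k : ℕ) (E : (ℕ → S N) → Prop) :
    prob A s k E = ∑' l : Vec N k, (if E (pos s l.1) then (1:ℝ) else 0) * wt A s l.1 := rfl

lemma summable_ind (hA : ∀ m i j, 0 ≤ A m i j)
    (hsum : ∀ i, Summable fun q : ℤ × Fin N => A q.1 i q.2)
    (hsub : ∀ i, ∑' q : ℤ × Fin N, A q.1 i q.2 ≤ 1)
    (s : S N) (k : ℕ) (E : (ℕ → S N) → Prop) :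
    Summable fun l : Vec N k => (if E (pos s l.1) then (1:ℝ) else 0) * wt A s l.1 := by
  refine Summable.of_nonneg_of_le
    (fun l => mul_nonneg (by positivity) (wt_nonneg hA _ _)) (fun l => ?_)
    ((wt_sum_aux hA hsum hsub k s).1)
  exact mul_le_of_le_one_left (wt_nonneg hA _ _) (by split <;> norm_num)

lemma prob_nonneg (hA : ∀ m i j, 0 ≤ A m i j) (s : S N) (k : ℕ) (E : (ℕ → S N) → Prop) :
    0 ≤ prob A s k E := by
  rw [prob_def]
  exact tsum_nonneg fun l => mul_nonneg (by positivity) (wt_nonneg hA _ _)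

lemma prob_mono (hA : ∀ m i j, 0 ≤ A m i j)
    (hsum : ∀ i, Summable fun q : ℤ × Fin N => A q.1 i q.2)
    (hsub : ∀ i, ∑' q : ℤ × Fin N, A q.1 i q.2 ≤ 1)
    (s : S N) (k : ℕ) {E F : (ℕ → S N) → Prop} (h : ∀ p, E p → F p) :
    prob A s k E ≤ prob A s k F := by
  rw [prob_def, prob_def]
  refine Summable.tsum_le_tsum (fun l => ?_) (summable_ind hA hsum hsub s k E)
    (summable_ind hA hsum hsub s k F)
  gcongr
  · exact wt_nonneg hA _ _
  · split
    · rw [if_pos (h _ (by assumption))]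
    · split <;> norm_num

lemma prob_congr (s : S N) (k : ℕ) {E F : (ℕ → S N) → Prop} (h : ∀ p, E p ↔ F p) :
    prob A s k E = prob A s k F := by
  rw [prob_def, prob_def]
  exact tsum_congr fun l => by rw [if_congr (h _) rfl rfl]

lemma prob_zero_horizon (s : S N) (E : (ℕ → S N) → Prop) :
    prob A s 0 E = if E (fun _ => s) then 1 else 0 := by
  rw [prob_def, tsum_eq_single (default : Vec N 0)
    (fun b hb => absurd (Subsingleton.elim b default) hb)]
  have h1 : pos s (default : Vec N 0).1 = fun _ => s := pos_nil s
  have h2 : wt A s (default : Vec N 0).1 = 1 := wt_nil s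
  rw [h1, h2, mul_one]

-- pos lemmas

lemma pos_succ_getD (s : S N) (l : List (S N)) (m : ℕ) : pos s l (m + 1) = l.getD m s := rfl

lemma pos_append_le (s : S N) (a b : List (S N)) (m : ℕ) (hm : m ≤ a.length) :
    pos s (a ++ b) m = pos s a m := by
  cases m with
  | zero => rfl
  | succ m =>
    have hm' : m < a.length := hm
    rw [pos_succ_getD, pos_succ_getD, List.getD_eq_getElem?_getD, List.getD_eq_getElem?_getD,
      List.getElem?_append_left hm']

lemma pos_getLastD (s : S N) (a : List (S N)) : pos s a a.length = a.getLastD s := by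
  cases a with
  | nil => rfl
  | cons t r =>
    show (t :: r).getD r.length s = (t :: r).getLastD s
    rw [List.getD_eq_getElem?_getD, List.getLastD_eq_getLast?, List.getLast?_eq_getElem?]
    simp

lemma pos_append_shift (s : S N) (a b : List (S N)) (m : ℕ) (hm : m ≤ b.length) :
    pos s (a ++ b) (a.length + m) = pos (a.getLastD s) b m := by
  cases m with
  | zero =>
    rw [Nat.add_zero, pos_append_le s a b a.length le_rfl, pos_getLastD]
    rfl
  | succ m =>
    have hm' : m < b.length := hm
    have harith : a.length + (m + 1) = (a.length + m) + 1 := by omega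
    have hidx : a.length + m - a.length = m := by omega
    rw [harith, pos_succ_getD, pos_succ_getD, List.getD_eq_getElem?_getD,
      List.getD_eq_getElem?_getD, List.getElem?_append_right
        (by omega : a.length ≤ a.length + m), hidx, List.getElem?_eq_getElem hm']
    rfl

lemma pos_cons (s t : S N) (r : List (S N)) (m : ℕ) (hm : m ≤ r.length) :
    pos s (t :: r) (m + 1) = pos t r m := by
  cases m with
  | zero => rfl
  | succ m =>
    have hm' : m < r.length := hm
    show (t :: r).getD (m + 1) s = r.getD m t
    rw [List.getD_cons_succ, List.getD_eq_getElem _ _ hm', List.getD_eq_getElem _ _ hm']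

lemma wt_append (s : S N) (a b : List (S N)) :
    wt A s (a ++ b) = wt A s a * wt A (a.getLastD s) b := by
  induction a generalizing s with
  | nil => simp [wt_nil]
  | cons t r ih =>
    rw [List.cons_append, wt_cons, ih t, wt_cons, List.getLastD_cons, mul_assoc]

def appendEquiv (r m : ℕ) : (Vec N r × Vec N m) ≃ Vec N (r + m) where
  toFun x := ⟨x.1.1 ++ x.2.1, by simp [x.1.2, x.2.2]⟩
  invFun l := (⟨l.1.take r, by simp [l.2]⟩, ⟨l.1.drop r, by simp [l.2]⟩)
  left_inv := fun ⟨⟨a, ha⟩, ⟨b, hb⟩⟩ => by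
    ext : 2
    · exact congrArg (fun t => t) (by simp [List.take_left' ha])
    · simp [List.drop_left' ha]
  right_inv := fun ⟨l, h⟩ => by
    apply Subtype.ext
    simp

-- ==== chunk 4: splitting lemma ====

set_option maxHeartbeats 1000000 in
lemma prob_mul (hA : ∀ m i j, 0 ≤ A m i j)
    (hsum : ∀ i, Summable fun q : ℤ × Fin N => A q.1 i q.2)
    (hsub : ∀ i, ∑' q : ℤ × Fin N, A q.1 i q.2 ≤ 1)
    (s : S N) (r m : ℕ) (c : S N)
    (E₁ E₂ : (ℕ → S N) → Prop)
    (h₁ : ∀ p q : ℕ → S N, (∀ t, t ≤ r → p t = q t) → (E₁ p ↔ E₁ q))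
    (h₂ : ∀ p q : ℕ → S N, (∀ t, t ≤ m → p t = q t) → (E₂ p ↔ E₂ q))
    (hE₁ : ∀ p, E₁ p → p r = c) :
    prob A s (r + m) (fun p => E₁ (fun t => p (min t r)) ∧ E₂ (fun t => p (r + t)))
      = prob A s r E₁ * prob A c m E₂ := by
  rw [prob_def, prob_def, prob_def]
  rw [← Equiv.tsum_eq (appendEquiv r m)]
  have hsum1 := summable_ind hA hsum hsub s r E₁
  have hsum2 := summable_ind hA hsum hsub c m E₂
  have hprodsum : Summable fun x : Vec N r × Vec N m =>
      ((if E₁ (pos s x.1.1) then (1:ℝ) else 0) * wt A s x.1.1) *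
      ((if E₂ (pos c x.2.1) then (1:ℝ) else 0) * wt A c x.2.1) :=
    Summable.mul_of_nonneg hsum1 hsum2
      (fun l => mul_nonneg (by positivity) (wt_nonneg hA _ _))
      (fun l => mul_nonneg (by positivity) (wt_nonneg hA _ _))
  rw [Summable.tsum_mul_tsum hsum1 hsum2 hprodsum]
  refine (tsum_congr fun x => ?_).symm
  obtain ⟨⟨a, ha⟩, ⟨b, hb⟩⟩ := x
  -- the appended list
  have happ : ((appendEquiv r m) (⟨a, ha⟩, ⟨b, hb⟩)).1 = a ++ b := rfl
  rw [happ]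
  have hiff1 : E₁ (fun t => pos s (a ++ b) (min t r)) ↔ E₁ (pos s a) := by
    refine h₁ _ _ fun t ht => ?_
    rw [min_eq_left ht, ← ha] at *
    exact pos_append_le s a b t ht
  by_cases he1 : E₁ (pos s a)
  · have hc : a.getLastD s = c := by
      have := hE₁ _ he1
      rw [← this, ← ha, pos_getLastD]
    have hiff2 : E₂ (fun t => pos s (a ++ b) (r + t)) ↔ E₂ (pos c b) := by
      refine h₂ _ _ fun t ht => ?_
      rw [← hb] at ht
      rw [← ha, pos_append_shift s a b t ht, hc]
    have hwt : wt A s (a ++ b) = wt A s a * wt A c b := by rw [wt_append, hc]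
    by_cases he2 : E₂ (pos c b)
    · rw [if_pos he1, if_pos he2, if_pos ⟨hiff1.mpr he1, hiff2.mpr he2⟩, hwt]; ring
    · have hfalse : ¬((E₁ fun t => pos s (a ++ b) (min t r)) ∧ E₂ fun t => pos s (a ++ b) (r + t)) :=
        fun h => he2 (hiff2.mp h.2)
      rw [if_neg he2, if_neg hfalse]
      ring
  · have hfalse : ¬((E₁ fun t => pos s (a ++ b) (min t r)) ∧ E₂ fun t => pos s (a ++ b) (r + t)) :=
      fun h => he1 (hiff1.mp h.1)
    rw [if_neg he1, if_neg hfalse]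
    ring

-- ==== chunk 5: first-return decomposition ====

def lterm (A : ℤ → Matrix (Fin N) (Fin N) ℝ) (n : ℤ) (i j : Fin N) (k : ℕ) : ℝ :=
  prob A ((0 : ℤ), i) k fun p => p k = ((0 : ℤ), j) ∧ ∀ m < k, (p m).1 ≠ n

def hterm (A : ℤ → Matrix (Fin N) (Fin N) ℝ) (n : ℤ) (i l : Fin N) (r : ℕ) : ℝ :=
  prob A ((0 : ℤ), i) r fun p =>
    p r = ((0 : ℤ), l) ∧ (∀ m < r, (p m).1 ≠ n) ∧ ∀ m, 0 < m → m < r → (p m).1 ≠ 0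

def ind (P : Prop) : ℝ := if P then 1 else 0

lemma ind_pos {P : Prop} (h : P) : ind P = 1 := by simp [ind, h]
lemma ind_neg {P : Prop} (h : ¬P) : ind P = 0 := by simp [ind, h]
lemma ind_congr {P Q : Prop} (h : P ↔ Q) : ind P = ind Q := by
  simp only [ind]; exact if_congr h rfl rfl

lemma ind_partition (n : ℤ) (j : Fin N) (k : ℕ) (p : ℕ → S N) :
    ind (p (k+1) = ((0:ℤ), j) ∧ ∀ m < k+1, (p m).1 ≠ n)
      = ∑ r ∈ Finset.range (k+1), ∑ l : Fin N,
          ind ((p (k+1) = ((0:ℤ), j) ∧ ∀ m < k+1, (p m).1 ≠ n) ∧ p (r+1) = ((0:ℤ), l) ∧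
              ∀ m, 0 < m → m < r+1 → (p m).1 ≠ 0) := by
  by_cases hE : (p (k+1) = ((0:ℤ), j) ∧ ∀ m < k+1, (p m).1 ≠ n)
  · have hex : ∃ m : ℕ, (p (m+1)).1 = 0 := ⟨k, by rw [hE.1]⟩
    have hspec : (p (Nat.find hex + 1)).1 = 0 := Nat.find_spec hex
    have hr₀k : Nat.find hex ≤ k := Nat.find_le (by rw [hE.1])
    have key : ∀ (r : ℕ) (l : Fin N),
        ((p (k+1) = ((0:ℤ), j) ∧ ∀ m < k+1, (p m).1 ≠ n) ∧ p (r+1) = ((0:ℤ), l) ∧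
            ∀ m, 0 < m → m < r+1 → (p m).1 ≠ 0)
          ↔ (r = Nat.find hex ∧ l = (p (Nat.find hex + 1)).2) := by
      intro r l
      constructor
      · rintro ⟨-, hret, havoid⟩
        have h1 : Nat.find hex ≤ r := Nat.find_le (by rw [hret])
        have h2 : ¬ (Nat.find hex < r) := by
          intro hlt
          exact havoid (Nat.find hex + 1) (Nat.succ_pos _) (by omega) hspec
        have hr : r = Nat.find hex := by omega
        subst hr
        rw [hret]
        exact ⟨rfl, rfl⟩
      · rintro ⟨rfl, rfl⟩
        refine ⟨hE, ?_, ?_⟩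
        · exact Prod.ext hspec rfl
        · intro m hm hm'
          have hm'' : m - 1 < Nat.find hex := by omega
          have hmin := Nat.find_min hex hm''
          intro hcon
          apply hmin
          have heq : m - 1 + 1 = m := by omega
          rw [heq]
          exact hcon
    rw [ind_pos hE,
      Finset.sum_congr rfl fun r _ => Finset.sum_congr rfl fun l _ => ind_congr (key r l)]
    have inner : ∀ r : ℕ,
        (∑ l : Fin N, ind (r = Nat.find hex ∧ l = (p (Nat.find hex + 1)).2))
          = ind (r = Nat.find hex) := by
      intro r
      by_cases hr : r = Nat.find hex <;> simp [ind, hr]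
    rw [Finset.sum_congr rfl fun r _ => inner r]
    have last : ∀ r ∈ Finset.range (k+1),
        ind (r = Nat.find hex) = if r = Nat.find hex then (1:ℝ) else 0 := fun r _ => by
      by_cases h : r = Nat.find hex <;> simp [ind, h]
    rw [Finset.sum_congr rfl last,
      Finset.sum_ite_eq' (Finset.range (k+1)) (Nat.find hex) (fun _ => (1:ℝ)),
      if_pos (Finset.mem_range.mpr (by omega))]
  · rw [ind_neg hE]
    symm
    exact Finset.sum_eq_zero fun r _ => Finset.sum_eq_zero fun l _ => ind_neg fun h => hE h.1

lemma lterm_zero (n : ℤ) (i j : Fin N) : lterm A n i j 0 = if i = j then (1:ℝ) else 0 := by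
  rw [lterm, prob_zero_horizon]
  by_cases h : i = j
  · subst h
    rw [if_pos ⟨rfl, fun m hm => absurd hm (by omega)⟩, if_pos rfl]
  · rw [if_neg h, if_neg (fun hc => h (congrArg Prod.snd hc.1))]

lemma summable_lterm (hA : ∀ m i j, 0 ≤ A m i j)
    (hsum : ∀ i, Summable fun q : ℤ × Fin N => A q.1 i q.2)
    (hsub : ∀ i, ∑' q : ℤ × Fin N, A q.1 i q.2 ≤ 1)
    (hL : ∀ i j : Fin N,
      Summable fun k : ℕ => prob A ((0 : ℤ), i) k fun p => p k = ((0 : ℤ), j))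
    (n : ℤ) (i j : Fin N) : Summable (lterm A n i j) := by
  refine Summable.of_norm_bounded (hL i j) (fun k => ?_)
  rw [Real.norm_of_nonneg (show (0:ℝ) ≤ lterm A n i j k from prob_nonneg hA _ _ _)]
  exact prob_mono hA hsum hsub _ _ (fun p h => h.1)

lemma summable_hterm (hA : ∀ m i j, 0 ≤ A m i j)
    (hsum : ∀ i, Summable fun q : ℤ × Fin N => A q.1 i q.2)
    (hsub : ∀ i, ∑' q : ℤ × Fin N, A q.1 i q.2 ≤ 1)
    (hL : ∀ i j : Fin N,
      Summable fun k : ℕ => prob A ((0 : ℤ), i) k fun p => p k = ((0 : ℤ), j))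
    (n : ℤ) (i l : Fin N) : Summable (hterm A n i l) := by
  refine Summable.of_norm_bounded (hL i l) (fun k => ?_)
  rw [Real.norm_of_nonneg (show (0:ℝ) ≤ hterm A n i l k from prob_nonneg hA _ _ _)]
  exact prob_mono hA hsum hsub _ _ (fun p h => h.1)

lemma prob_partition (hA : ∀ m i j, 0 ≤ A m i j)
    (hsum : ∀ i, Summable fun q : ℤ × Fin N => A q.1 i q.2)
    (hsub : ∀ i, ∑' q : ℤ × Fin N, A q.1 i q.2 ≤ 1)
    (s : S N) (k : ℕ) {ι : Type*} (t : Finset ι)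
    (E : (ℕ → S N) → Prop) (F : ι → (ℕ → S N) → Prop)
    (hpt : ∀ p, ind (E p) = ∑ x ∈ t, ind (F x p)) :
    prob A s k E = ∑ x ∈ t, prob A s k (F x) := by
  have h1 : prob A s k E = ∑' l : Vec N k, ind (E (pos s l.1)) * wt A s l.1 := rfl
  have h2 : ∀ x : ι, prob A s k (F x) = ∑' l : Vec N k, ind (F x (pos s l.1)) * wt A s l.1 :=
    fun x => rfl
  have hsummand : ∀ x : ι, Summable fun l : Vec N k => ind (F x (pos s l.1)) * wt A s l.1 :=
    fun x => summable_ind hA hsum hsub s k (F x)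
  rw [h1, Finset.sum_congr rfl fun x _ => h2 x, ← Summable.tsum_finsetSum fun x _ => hsummand x]
  refine tsum_congr fun l => ?_
  rw [hpt (pos s l.1), Finset.sum_mul]

lemma lterm_succ_decomp (hA : ∀ m i j, 0 ≤ A m i j)
    (hsum : ∀ i, Summable fun q : ℤ × Fin N => A q.1 i q.2)
    (hsub : ∀ i, ∑' q : ℤ × Fin N, A q.1 i q.2 ≤ 1)
    (n : ℤ) (i j : Fin N) (k : ℕ) :
    lterm A n i j (k+1) = ∑ r ∈ Finset.range (k+1), ∑ l : Fin N,
      hterm A n i l (r+1) * lterm A n l j (k - r) := by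
  have hpt : ∀ p : ℕ → S N,
      ind (p (k+1) = ((0:ℤ), j) ∧ ∀ m < k+1, (p m).1 ≠ n)
        = ∑ x ∈ (Finset.range (k+1)) ×ˢ (Finset.univ : Finset (Fin N)),
          ind ((p (k+1) = ((0:ℤ), j) ∧ ∀ m < k+1, (p m).1 ≠ n) ∧ p (x.1+1) = ((0:ℤ), x.2) ∧
              ∀ m, 0 < m → m < x.1+1 → (p m).1 ≠ 0) := by
    intro p
    rw [Finset.sum_product, ind_partition n j k p]
  rw [lterm, prob_partition hA hsum hsub ((0:ℤ), i) (k+1)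
    ((Finset.range (k+1)) ×ˢ (Finset.univ : Finset (Fin N)))
    (fun p => p (k+1) = ((0:ℤ), j) ∧ ∀ m < k+1, (p m).1 ≠ n)
    (fun x p => (p (k+1) = ((0:ℤ), j) ∧ ∀ m < k+1, (p m).1 ≠ n) ∧ p (x.1+1) = ((0:ℤ), x.2) ∧
      ∀ m, 0 < m → m < x.1+1 → (p m).1 ≠ 0) hpt, Finset.sum_product]
  refine Finset.sum_congr rfl fun r hr => ?_
  have hrk : r ≤ k := by
    have := Finset.mem_range.mp hr; omega
  refine Finset.sum_congr rfl fun l _ => ?_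
  rw [hterm, lterm]
  have h₁aux : ∀ p q : ℕ → S N, (∀ t, t ≤ r+1 → p t = q t) →
      ((p (r+1) = ((0:ℤ), l) ∧ (∀ m < r+1, (p m).1 ≠ n) ∧
        ∀ m, 0 < m → m < r+1 → (p m).1 ≠ 0) →
       (q (r+1) = ((0:ℤ), l) ∧ (∀ m < r+1, (q m).1 ≠ n) ∧
        ∀ m, 0 < m → m < r+1 → (q m).1 ≠ 0)) := by
    rintro p q hag ⟨x1, x2, x3⟩
    refine ⟨?_, ?_, ?_⟩
    · rw [← hag (r+1) le_rfl]; exact x1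
    · intro m hm; rw [← hag m (by omega)]; exact x2 m hm
    · intro m hm hm'; rw [← hag m (by omega)]; exact x3 m hm hm'
  have h₂aux : ∀ p q : ℕ → S N, (∀ t, t ≤ k - r → p t = q t) →
      ((p (k-r) = ((0:ℤ), j) ∧ ∀ m < k-r, (p m).1 ≠ n) →
       (q (k-r) = ((0:ℤ), j) ∧ ∀ m < k-r, (q m).1 ≠ n)) := by
    rintro p q hag ⟨x1, x2⟩
    refine ⟨?_, ?_⟩
    · rw [← hag (k-r) le_rfl]; exact x1
    · intro m hm; rw [← hag m (by omega)]; exact x2 m hm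
  rw [← prob_mul hA hsum hsub ((0:ℤ),i) (r+1) (k-r) ((0:ℤ), l)
      (fun p => p (r+1) = ((0:ℤ), l) ∧ (∀ m < r+1, (p m).1 ≠ n) ∧
        ∀ m, 0 < m → m < r+1 → (p m).1 ≠ 0)
      (fun p => p (k-r) = ((0:ℤ), j) ∧ ∀ m < k-r, (p m).1 ≠ n)
      (fun p q hag => ⟨h₁aux p q hag, h₁aux q p (fun t ht => (hag t ht).symm)⟩)
      (fun p q hag => ⟨h₂aux p q hag, h₂aux q p (fun t ht => (hag t ht).symm)⟩)
      (fun p h => h.1)]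
  have harith : (r+1) + (k - r) = k + 1 := by omega
  rw [← harith]
  refine prob_congr _ _ fun p => ?_
  constructor
  · rintro ⟨⟨hj, hav⟩, hret, h0⟩
    refine ⟨⟨?_, fun m hm => ?_, fun m hm hm' => ?_⟩, hj, fun m hm => hav ((r+1)+m) (by omega)⟩
    · show p (min (r+1) (r+1)) = ((0:ℤ), l)
      rw [min_self]; exact hret
    · show (p (min m (r+1))).1 ≠ n
      rw [min_eq_left (by omega)]; exact hav m (by omega)
    · show (p (min m (r+1))).1 ≠ 0
      rw [min_eq_left (by omega)]; exact h0 m hm hm'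
  · rintro ⟨⟨x1, x2, x3⟩, y1, y2⟩
    replace x1 : p (min (r+1) (r+1)) = ((0:ℤ), l) := x1
    rw [min_self] at x1
    replace y1 : p ((r+1)+(k-r)) = ((0:ℤ), j) := y1
    refine ⟨⟨y1, ?_⟩, x1, fun m hm hm' => ?_⟩
    · intro m hm
      by_cases hmr : m < r + 1
      · have h2 := x2 m hmr
        replace h2 : (p (min m (r+1))).1 ≠ n := h2
        rwa [min_eq_left (by omega)] at h2
      · have hm2 : m - (r+1) < k - r := by omega
        have hy := y2 (m - (r+1)) hm2
        replace hy : (p ((r+1) + (m - (r+1)))).1 ≠ n := hy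
        have heq : (r+1) + (m - (r+1)) = m := by omega
        rwa [heq] at hy
    · have h3 := x3 m hm hm'
      replace h3 : (p (min m (r+1))).1 ≠ 0 := h3
      rwa [min_eq_left (by omega)] at h3

-- ==== chunk 7: matrices and part 1 ====

lemma occ_apply (n : ℤ) (i j : Fin N) :
    occUpToMat A 1 n i j = ∑' k : ℕ, lterm A n i j k := by
  simp only [occUpToMat, Matrix.of_apply, one_pow, one_mul]
  rfl

lemma summable_norm_of_nonneg {f : ℕ → ℝ} (h0 : ∀ x, 0 ≤ f x) (hf : Summable f) :
    Summable fun x => ‖f x‖ :=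
  (summable_congr fun x => Real.norm_of_nonneg (h0 x)).mpr hf

lemma occ_renewal (hA : ∀ m i j, 0 ≤ A m i j)
    (hsum : ∀ i, Summable fun q : ℤ × Fin N => A q.1 i q.2)
    (hsub : ∀ i, ∑' q : ℤ × Fin N, A q.1 i q.2 ≤ 1)
    (hL : ∀ i j : Fin N,
      Summable fun k : ℕ => prob A ((0 : ℤ), i) k fun p => p k = ((0 : ℤ), j))
    (n : ℤ) :
    occUpToMat A 1 n
      = 1 + (Matrix.of fun i l : Fin N => ∑' r : ℕ, hterm A n i l (r+1)) * occUpToMat A 1 n := by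
  ext i j
  rw [Matrix.add_apply, Matrix.mul_apply, occ_apply]
  have hsl : ∀ a b : Fin N, Summable (lterm A n a b) :=
    fun a b => summable_lterm hA hsum hsub hL n a b
  have hsh : ∀ a b : Fin N, Summable (fun r : ℕ => hterm A n a b (r+1)) :=
    fun a b => (summable_nat_add_iff 1).2 (summable_hterm hA hsum hsub hL n a b)
  have hln : ∀ a b : Fin N, ∀ k, (0:ℝ) ≤ lterm A n a b k :=
    fun a b k => prob_nonneg hA _ _ _
  have hhn : ∀ a b : Fin N, ∀ k, (0:ℝ) ≤ hterm A n a b (k+1) :=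
    fun a b k => prob_nonneg hA _ _ _
  have hnorm1 : ∀ l : Fin N, Summable fun r : ℕ => ‖hterm A n i l (r+1)‖ :=
    fun l => summable_norm_of_nonneg (hhn i l) (hsh i l)
  have hnorm2 : ∀ l : Fin N, Summable fun m : ℕ => ‖lterm A n l j m‖ :=
    fun l => summable_norm_of_nonneg (hln l j) (hsl l j)
  rw [Summable.tsum_eq_zero_add (hsl i j)]
  congr 1
  · rw [lterm_zero, Matrix.one_apply]
  · calc ∑' k : ℕ, lterm A n i j (k+1)
        = ∑' k : ℕ, ∑ l : Fin N, ∑ r ∈ Finset.range (k+1),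
            hterm A n i l (r+1) * lterm A n l j (k-r) :=
          tsum_congr fun k => by
            rw [lterm_succ_decomp hA hsum hsub n i j k]; exact Finset.sum_comm
      _ = ∑ l : Fin N, ∑' k : ℕ, ∑ r ∈ Finset.range (k+1),
            hterm A n i l (r+1) * lterm A n l j (k-r) :=
          Summable.tsum_finsetSum fun l _ =>
            (summable_norm_sum_mul_range_of_summable_norm (hnorm1 l) (hnorm2 l)).of_norm
      _ = ∑ l : Fin N, (∑' r : ℕ, hterm A n i l (r+1)) * (∑' m : ℕ, lterm A n l j m) :=
          Finset.sum_congr rfl fun l _ =>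
            (tsum_mul_tsum_eq_tsum_sum_range_of_summable_norm (hnorm1 l) (hnorm2 l)).symm
      _ = ∑ l : Fin N, (Matrix.of fun a b : Fin N => ∑' r : ℕ, hterm A n a b (r+1)) i l
            * occUpToMat A 1 n l j := by
          refine Finset.sum_congr rfl fun l _ => ?_
          rw [Matrix.of_apply, occ_apply]

lemma part1 (hA : ∀ m i j, 0 ≤ A m i j)
    (hsum : ∀ i, Summable fun q : ℤ × Fin N => A q.1 i q.2)
    (hsub : ∀ i, ∑' q : ℤ × Fin N, A q.1 i q.2 ≤ 1)
    (hL : ∀ i j : Fin N,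
      Summable fun k : ℕ => prob A ((0 : ℤ), i) k fun p => p k = ((0 : ℤ), j))
    (n : ℤ) : IsUnit (occUpToMat A 1 n) := by
  have heq := occ_renewal hA hsum hsub hL n
  have hleft : (1 - (Matrix.of fun i l : Fin N => ∑' r : ℕ, hterm A n i l (r+1)))
      * occUpToMat A 1 n = 1 := by
    rw [sub_mul, one_mul]
    nth_rewrite 1 [heq]
    rw [add_sub_cancel_right]
  exact (Matrix.isUnit_iff_isUnit_det _).mpr (Matrix.isUnit_det_of_left_inverse hleft)

-- ==== chunk 8: Gmat = occUpToMat * A 1 ====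

lemma wt_zero_of_jump (hskip : ∀ m : ℤ, 2 ≤ m → A m = 0) :
    ∀ (l : List (S N)) (s : S N) (m : ℕ), m < l.length →
      2 ≤ (pos s l (m+1)).1 - (pos s l m).1 → wt A s l = 0 := by
  intro l
  induction l with
  | nil => intro s m hm h2; simp at hm
  | cons t r ih =>
    intro s m hm h2
    cases m with
    | zero =>
      have h2' : 2 ≤ t.1 - s.1 := h2
      have hz : A (t.1 - s.1) = 0 := hskip _ h2'
      rw [wt_cons]
      have hstep : step A s t = 0 := by simp [step, hz]
      rw [hstep, zero_mul]
    | succ m =>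
      have hmr : m + 1 ≤ r.length := by
        have hm' : m + 1 + 1 ≤ (t :: r).length := hm
        simpa using hm'
      have hrec : wt A t r = 0 := by
        apply ih t m (by omega)
        rw [← pos_cons s t r (m+1) hmr, ← pos_cons s t r m (by omega)]
        exact h2
      rw [wt_cons, hrec, mul_zero]

def singEquiv : S N ≃ Vec N 1 where
  toFun t := ⟨[t], rfl⟩
  invFun l :=
    match l with
    | ⟨t :: _, _⟩ => t
    | ⟨[], h⟩ => absurd h (by simp)
  left_inv t := rfl
  right_inv := fun l => by
    obtain ⟨l, h⟩ := l
    cases l with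
    | nil => simp at h
    | cons t r =>
      cases r with
      | nil => rfl
      | cons a r' => simp at h

lemma prob_one_step (s t₀ : S N) :
    prob A s 1 (fun p => p 1 = t₀) = step A s t₀ := by
  have h1 : prob A s 1 (fun p => p 1 = t₀)
      = ∑' l : Vec N 1, ind ((pos s l.1) 1 = t₀) * wt A s l.1 := rfl
  rw [h1, ← Equiv.tsum_eq singEquiv]
  have hco : ∀ t : S N, ind ((pos s ((singEquiv t).1)) 1 = t₀) * wt A s ((singEquiv t).1)
      = if t = t₀ then step A s t₀ else 0 := by
    intro t
    by_cases h : t = t₀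
    · subst h
      rw [if_pos rfl, ind_pos (show (pos s ((singEquiv t).1)) 1 = t from rfl), one_mul]
      show wt A s [t] = step A s t
      rw [wt_cons, wt_nil, mul_one]
    · rw [if_neg h,
        ind_neg (show ¬((pos s ((singEquiv t).1)) 1 = t₀) from fun hc => h hc), zero_mul]
  rw [tsum_congr hco, tsum_ite_eq]

lemma g_zero (i j : Fin N) :
    prob A ((0:ℤ), i) 0 (fun p => hitsAt 1 0 p ∧ (p 0).2 = j) = 0 := by
  rw [prob_zero_horizon, if_neg]
  intro h
  have h1 : ((0:ℤ), i).1 = (1:ℤ) := h.1.1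
  norm_num at h1

lemma g_succ (hA : ∀ m i j, 0 ≤ A m i j)
    (hskip : ∀ m : ℤ, 2 ≤ m → A m = 0)
    (hsum : ∀ i, Summable fun q : ℤ × Fin N => A q.1 i q.2)
    (hsub : ∀ i, ∑' q : ℤ × Fin N, A q.1 i q.2 ≤ 1)
    (i j : Fin N) (k : ℕ) :
    prob A ((0:ℤ), i) (k+1) (fun p => hitsAt 1 (k+1) p ∧ (p (k+1)).2 = j)
      = ∑ l : Fin N, prob A ((0:ℤ), i) (k+1)
          (fun p => (hitsAt 1 (k+1) p ∧ (p (k+1)).2 = j) ∧ p k = ((0:ℤ), l)) := by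
  have h1 : prob A ((0:ℤ), i) (k+1) (fun p => hitsAt 1 (k+1) p ∧ (p (k+1)).2 = j)
      = ∑' li : Vec N (k+1),
          ind (hitsAt 1 (k+1) (pos ((0:ℤ), i) li.1) ∧ ((pos ((0:ℤ), i) li.1) (k+1)).2 = j)
            * wt A ((0:ℤ), i) li.1 := rfl
  have h2 : ∀ l : Fin N, prob A ((0:ℤ), i) (k+1)
        (fun p => (hitsAt 1 (k+1) p ∧ (p (k+1)).2 = j) ∧ p k = ((0:ℤ), l))
      = ∑' li : Vec N (k+1),
          ind ((hitsAt 1 (k+1) (pos ((0:ℤ), i) li.1) ∧ ((pos ((0:ℤ), i) li.1) (k+1)).2 = j)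
              ∧ (pos ((0:ℤ), i) li.1) k = ((0:ℤ), l))
            * wt A ((0:ℤ), i) li.1 := fun l => rfl
  have hsp : ∀ l : Fin N, Summable (fun li : Vec N (k+1) =>
      ind ((hitsAt 1 (k+1) (pos ((0:ℤ), i) li.1) ∧ ((pos ((0:ℤ), i) li.1) (k+1)).2 = j)
          ∧ (pos ((0:ℤ), i) li.1) k = ((0:ℤ), l)) * wt A ((0:ℤ), i) li.1) :=
    fun l => summable_ind hA hsum hsub ((0:ℤ), i) (k+1)
      (fun p => (hitsAt 1 (k+1) p ∧ (p (k+1)).2 = j) ∧ p k = ((0:ℤ), l))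
  rw [h1, Finset.sum_congr rfl fun l _ => h2 l, ← Summable.tsum_finsetSum (fun l _ => hsp l)]
  refine tsum_congr fun li => ?_
  rw [← Finset.sum_mul]
  by_cases h0 : ((pos ((0:ℤ), i) li.1) k).1 = 0
  · congr 1
    by_cases hE : (hitsAt 1 (k+1) (pos ((0:ℤ), i) li.1) ∧ ((pos ((0:ℤ), i) li.1) (k+1)).2 = j)
    · rw [ind_pos hE]
      have hiff : ∀ l : Fin N,
          ((hitsAt 1 (k+1) (pos ((0:ℤ), i) li.1) ∧ ((pos ((0:ℤ), i) li.1) (k+1)).2 = j)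
            ∧ (pos ((0:ℤ), i) li.1) k = ((0:ℤ), l)) ↔ l = ((pos ((0:ℤ), i) li.1) k).2 :=
        fun l => ⟨fun h => (congrArg Prod.snd h.2).symm,
          fun hl => ⟨hE, Prod.ext h0 hl.symm⟩⟩
      rw [Finset.sum_congr rfl fun l _ => ind_congr (hiff l)]
      have hrw : ∀ x : Fin N, ind (x = ((pos ((0:ℤ), i) li.1) k).2)
          = if x = ((pos ((0:ℤ), i) li.1) k).2 then (1:ℝ) else 0 := fun x => by
        by_cases h : x = ((pos ((0:ℤ), i) li.1) k).2 <;> simp [ind, h]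
      rw [Finset.sum_congr rfl fun x _ => hrw x,
        Finset.sum_ite_eq' Finset.univ _ (fun _ => (1:ℝ)), if_pos (Finset.mem_univ _)]
    · rw [ind_neg hE]
      symm
      exact Finset.sum_eq_zero fun l _ => ind_neg fun h => hE h.1
  · rw [Finset.sum_eq_zero (fun l _ => ind_neg fun h => h0 (by rw [h.2])), zero_mul]
    by_cases hE : (hitsAt 1 (k+1) (pos ((0:ℤ), i) li.1) ∧ ((pos ((0:ℤ), i) li.1) (k+1)).2 = j)
    · rw [ind_pos hE, one_mul]
      obtain ⟨⟨hh1, hh2⟩, hphase⟩ := hE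
      by_cases hjump : ∃ m, m < li.1.length ∧
          2 ≤ ((pos ((0:ℤ), i) li.1 (m+1)).1 - (pos ((0:ℤ), i) li.1 m).1)
      · obtain ⟨m, hm, hj2⟩ := hjump
        exact wt_zero_of_jump hskip li.1 _ m hm hj2
      · push_neg at hjump
        exfalso
        have hlen : li.1.length = k+1 := li.2
        have hbound : ∀ m, m ≤ k → ((pos ((0:ℤ), i) li.1) m).1 ≤ 0 := by
          intro m
          induction m with
          | zero => intro _; exact le_of_eq rfl
          | succ m ih =>
            intro hm
            have hj' := hjump m (by omega)
            have hne : ((pos ((0:ℤ), i) li.1) (m+1)).1 ≠ 1 := hh2 (m+1) (by omega)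
            have hle := ih (by omega)
            omega
        have hj' := hjump k (by omega)
        have hlast := hbound k le_rfl
        omega
    · rw [ind_neg hE, zero_mul]

-- ==== chunk 9: G_eq and main theorem ====

lemma g_piece (hA : ∀ m i j, 0 ≤ A m i j)
    (hsum : ∀ i, Summable fun q : ℤ × Fin N => A q.1 i q.2)
    (hsub : ∀ i, ∑' q : ℤ × Fin N, A q.1 i q.2 ≤ 1)
    (i j l : Fin N) (k : ℕ) :
    prob A ((0:ℤ), i) (k+1)
        (fun p => (hitsAt 1 (k+1) p ∧ (p (k+1)).2 = j) ∧ p k = ((0:ℤ), l))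
      = lterm A 1 i l k * A 1 l j := by
  rw [lterm]
  rw [show A 1 l j = prob A ((0:ℤ), l) 1 (fun p => p 1 = ((1:ℤ), j)) from by
    rw [prob_one_step]; simp [step]]
  have h₁aux : ∀ p q : ℕ → S N, (∀ t, t ≤ k → p t = q t) →
      ((p k = ((0:ℤ), l) ∧ ∀ m < k, (p m).1 ≠ (1:ℤ)) →
        (q k = ((0:ℤ), l) ∧ ∀ m < k, (q m).1 ≠ (1:ℤ))) := by
    rintro p q hag ⟨x1, x2⟩
    exact ⟨by rw [← hag k le_rfl]; exact x1,
      fun m hm => by rw [← hag m (by omega)]; exact x2 m hm⟩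
  rw [← prob_mul hA hsum hsub ((0:ℤ), i) k 1 ((0:ℤ), l)
      (fun p => p k = ((0:ℤ), l) ∧ ∀ m < k, (p m).1 ≠ (1:ℤ))
      (fun p => p 1 = ((1:ℤ), j))
      (fun p q hag => ⟨h₁aux p q hag, h₁aux q p fun t ht => (hag t ht).symm⟩)
      (fun p q hag => by
        show p 1 = ((1:ℤ), j) ↔ q 1 = ((1:ℤ), j)
        rw [hag 1 le_rfl])
      (fun p h => h.1)]
  refine prob_congr _ _ fun p => ?_
  constructor
  · rintro ⟨⟨⟨hh1, hh2⟩, hph⟩, hk⟩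
    refine ⟨⟨?_, fun m hm => ?_⟩, ?_⟩
    · show p (min k k) = ((0:ℤ), l)
      rw [min_self]; exact hk
    · show (p (min m k)).1 ≠ (1:ℤ)
      rw [min_eq_left (by omega)]; exact hh2 m (by omega)
    · show p (k + 1) = ((1:ℤ), j)
      exact Prod.ext hh1 hph
  · rintro ⟨⟨x1, x2⟩, y1⟩
    replace x1 : p (min k k) = ((0:ℤ), l) := x1
    rw [min_self] at x1
    replace y1 : p (k + 1) = ((1:ℤ), j) := y1
    refine ⟨⟨⟨?_, ?_⟩, ?_⟩, x1⟩
    · rw [y1]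
    · intro m hm
      by_cases hmk : m < k
      · have h2 := x2 m hmk
        replace h2 : (p (min m k)).1 ≠ (1:ℤ) := h2
        rwa [min_eq_left (by omega)] at h2
      · have hmk' : m = k := by omega
        subst hmk'
        rw [x1]
        norm_num
    · rw [y1]

lemma G_eq (hA : ∀ m i j, 0 ≤ A m i j)
    (hskip : ∀ m : ℤ, 2 ≤ m → A m = 0)
    (hsum : ∀ i, Summable fun q : ℤ × Fin N => A q.1 i q.2)
    (hsub : ∀ i, ∑' q : ℤ × Fin N, A q.1 i q.2 ≤ 1)
    (hL : ∀ i j : Fin N,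
      Summable fun k : ℕ => prob A ((0 : ℤ), i) k fun p => p k = ((0 : ℤ), j)) :
    Gmat A = occUpToMat A 1 (1:ℤ) * A 1 := by
  ext i j
  have happ : Gmat A i j = ∑' n : ℕ,
      prob A ((0:ℤ), i) n (fun p => hitsAt 1 n p ∧ (p n).2 = j) := by
    simp only [Gmat, hitMat, Matrix.of_apply, one_pow, one_mul]
  rw [happ, Matrix.mul_apply]
  have hsucc : ∀ k : ℕ,
      prob A ((0:ℤ), i) (k+1) (fun p => hitsAt 1 (k+1) p ∧ (p (k+1)).2 = j)
        = ∑ l : Fin N, lterm A 1 i l k * A 1 l j := by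
    intro k
    rw [g_succ hA hskip hsum hsub i j k]
    exact Finset.sum_congr rfl fun l _ => g_piece hA hsum hsub i j l k
  have hsummable : Summable (fun n : ℕ =>
      prob A ((0:ℤ), i) n (fun p => hitsAt 1 n p ∧ (p n).2 = j)) := by
    rw [← summable_nat_add_iff 1]
    exact (summable_congr fun k => hsucc k).mpr
      (summable_sum fun l _ => (summable_lterm hA hsum hsub hL 1 i l).mul_right _)
  rw [Summable.tsum_eq_zero_add hsummable, g_zero, zero_add, tsum_congr hsucc,
    Summable.tsum_finsetSum (fun l _ => (summable_lterm hA hsum hsub hL 1 i l).mul_right _)]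
  refine Finset.sum_congr rfl fun l _ => ?_
  rw [tsum_mul_right, occ_apply]


/-- Invertibility: (1) L̃(n) is invertible for n ≥ 1;
(2) G is invertible; (3) W(n) = G^{-n} L̃(n) is invertible for n ≥ 1. -/
theorem statement12 {N : ℕ} (hN : 0 < N) (A : ℤ → Matrix (Fin N) (Fin N) ℝ)
    (hA : ∀ m i j, 0 ≤ A m i j)
    (hskip : ∀ m : ℤ, 2 ≤ m → A m = 0)
    (hsum : ∀ i, Summable fun q : ℤ × Fin N => A q.1 i q.2)
    (hsub : ∀ i, ∑' q : ℤ × Fin N, A q.1 i q.2 ≤ 1)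
    (hA1 : IsUnit (A 1))
    (hL : ∀ i j : Fin N,
      Summable fun k : ℕ => prob A ((0 : ℤ), i) k fun p => p k = ((0 : ℤ), j)) :
    (∀ n : ℕ, 1 ≤ n → IsUnit (occUpToMat A 1 (n : ℤ))) ∧
    IsUnit (Gmat A) ∧
    (∀ n : ℕ, 1 ≤ n → IsUnit ((Gmat A)⁻¹ ^ n * occUpToMat A 1 (n : ℤ))) := by
  have p1 : ∀ n : ℤ, IsUnit (occUpToMat A 1 n) := part1 hA hsum hsub hL
  have p2 : IsUnit (Gmat A) := by
    rw [G_eq hA hskip hsum hsub hL]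
    exact (p1 1).mul hA1
  have hGinv : IsUnit (Gmat A)⁻¹ := Matrix.isUnit_nonsing_inv_iff.mpr p2
  exact ⟨fun n _ => p1 (n : ℤ), p2, fun n _ => (hGinv.pow n).mul (p1 (n : ℤ))⟩

end MACPaper

end
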